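/- Let k ≥ 3 be odd and F = (θ₁,...,θ_d) a k-restricted minwise independent family of permutations of {1,...,n}. Let σ be the order-reversing permutation i ↦ n+1−i. Then the family of 2d permutations (θ_m and σ∘θ_m for all m) is (k+1)-restricted minwise independent. -/

import Mathlib

open Finset

private lemma alt_sum_aux (r : ℕ) :
    ∑ s ∈ Finset.range (r + 1), (-1 : ℚ) ^ s * ((r + 1).choose (s + 1)) = 1 := by
  have h := Int.alternating_sum_range_choose_of_ne (n := r + 1) (Nat.succ_ne_zero r)
  rw [Finset.sum_range_succ'] at h
  have h2 : ∑ s ∈ Finset.range (r + 1), (-1 : ℤ) ^ s * ((r + 1).choose (s + 1)) = 1 := by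
    have e : ∑ s ∈ Finset.range (r + 1), (-1 : ℤ) ^ (s + 1) * ((r + 1).choose (s + 1))
        = - ∑ s ∈ Finset.range (r + 1), (-1 : ℤ) ^ s * ((r + 1).choose (s + 1)) := by
      rw [← Finset.sum_neg_distrib]
      exact Finset.sum_congr rfl fun s _ => by ring
    simp only [e] at h
    simp at h
    linarith
  exact_mod_cast h2

private lemma alt_sum_choose (r : ℕ) :
    ∑ s ∈ Finset.range (r + 1), (-1 : ℚ) ^ s * (r.choose s) / (s + 1) = 1 / (r + 1) := by
  have hr : ((r : ℚ) + 1) ≠ 0 := by positivity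
  have terms : ∀ s ∈ Finset.range (r + 1),
      (-1 : ℚ) ^ s * (r.choose s) / (s + 1) * ((r : ℚ) + 1)
        = (-1 : ℚ) ^ s * ((r + 1).choose (s + 1)) := by
    intro s _
    have hs1 : ((s : ℚ) + 1) ≠ 0 := by positivity
    have key : ((r : ℚ) + 1) * (r.choose s) = ((r + 1).choose (s + 1)) * ((s : ℚ) + 1) := by
      exact_mod_cast Nat.add_one_mul_choose_eq r s
    field_simp
    linear_combination key
  rw [eq_div_iff hr, Finset.sum_mul, Finset.sum_congr rfl terms, alt_sum_aux]

private lemma incl_excl (n d : ℕ) (θ : Fin d → Equiv.Perm (Fin n)) (X : Finset (Fin n))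
    (x : Fin n) (hx : x ∈ X) :
    ((univ.filter fun m : Fin d => ∀ y ∈ X, θ m y ≤ θ m x).card : ℚ)
    = ∑ t ∈ (X.erase x).powerset, (-1 : ℚ) ^ t.card *
        ((univ.filter fun m : Fin d => ∀ y ∈ insert x t, θ m x ≤ θ m y).card : ℚ) := by
  have hXE : insert x (X.erase x) = X := insert_erase hx
  rw [← Finset.sum_boole]
  have pointwise : ∀ m : Fin d, (if ∀ y ∈ X, θ m y ≤ θ m x then (1 : ℚ) else 0)
      = ∑ t ∈ (X.erase x).powerset, (-1 : ℚ) ^ t.card *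
          (if ∀ y ∈ insert x t, θ m x ≤ θ m y then (1 : ℚ) else 0) := by
    intro m
    have e : ∀ y ∈ X.erase x, ((if θ m x ≤ θ m y then (-1 : ℚ) else 0) + 1)
        = (if θ m y ≤ θ m x then (1 : ℚ) else 0) := by
      intro y hy
      have hyx : θ m y ≠ θ m x := fun h => (ne_of_mem_erase hy) ((θ m).injective h)
      rcases le_or_gt (θ m x) (θ m y) with h | h
      · rw [if_pos h, if_neg (fun h2 => hyx (le_antisymm h2 h))]; norm_num
      · rw [if_neg (not_le.mpr h), if_pos h.le]; norm_num
    have h1 : (if ∀ y ∈ X, θ m y ≤ θ m x then (1 : ℚ) else 0)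
        = ∏ y ∈ X.erase x, ((if θ m x ≤ θ m y then (-1 : ℚ) else 0) + 1) := by
      rw [Finset.prod_congr rfl e, Finset.prod_boole]
      have hc : (∀ y ∈ X, θ m y ≤ θ m x) ↔ ∀ y ∈ X.erase x, θ m y ≤ θ m x := by
        conv_lhs => rw [← hXE]
        simp [Finset.forall_mem_insert]
      simp [hc]
    rw [h1, Finset.prod_add]
    refine Finset.sum_congr rfl fun t ht => ?_
    have e2 : ∀ y ∈ t, (if θ m x ≤ θ m y then (-1 : ℚ) else 0)
        = (-1) * (if θ m x ≤ θ m y then (1 : ℚ) else 0) := by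
      intro y _; split <;> ring
    have hcond : (∀ y ∈ t, θ m x ≤ θ m y) ↔ (∀ y ∈ insert x t, θ m x ≤ θ m y) := by
      simp [Finset.forall_mem_insert]
    rw [Finset.prod_congr rfl e2, Finset.prod_mul_distrib, Finset.prod_const, Finset.prod_boole]
    rw [Finset.prod_const_one, mul_one]
    simp only [hcond]
  rw [Finset.sum_congr rfl (fun m _ => pointwise m), Finset.sum_comm]
  refine Finset.sum_congr rfl fun t _ => ?_
  rw [← Finset.mul_sum, Finset.sum_boole]

/-- Let `k ≥ 3` be odd and `(θ₁,…,θ_d)` a `k`-restricted minwise independent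
family of permutations of `{1,…,n}` (with `k+1 ≤ n`). With `σ` the
order-reversing permutation, the `2d` permutations `θ_m` and `σ∘θ_m` form a
`(k+1)`-restricted minwise independent family. -/
theorem stmt_9 (n k d : ℕ) (hodd : Odd k) (hk3 : 3 ≤ k) (hkn : k + 1 ≤ n)
    (θ : Fin d → Equiv.Perm (Fin n))
    (hmin : ∀ j, 1 ≤ j → j ≤ k → ∀ X : Finset (Fin n), X.card = j → ∀ x ∈ X,
      (Finset.univ.filter fun i : Fin d => ∀ y ∈ X, θ i x ≤ θ i y).card * j = d) :
    ∀ j, 1 ≤ j → j ≤ k + 1 → ∀ X : Finset (Fin n), X.card = j → ∀ x ∈ X,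
      (Finset.univ.filter fun i : Fin d ⊕ Fin d =>
        ∀ y ∈ X, (Sum.elim θ (fun m => Fin.revPerm * θ m) i) x ≤
                 (Sum.elim θ (fun m => Fin.revPerm * θ m) i) y).card * j = 2 * d := by
  intro j hj1 hjk X hX x hx
  obtain ⟨r, rfl⟩ : ∃ r, j = r + 1 := ⟨j - 1, (Nat.succ_pred_eq_of_pos hj1).symm⟩
  -- split the sum-type count into a min-count and a max-count
  have hsplit : (Finset.univ.filter fun i : Fin d ⊕ Fin d =>
      ∀ y ∈ X, (Sum.elim θ (fun m => Fin.revPerm * θ m) i) x ≤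
               (Sum.elim θ (fun m => Fin.revPerm * θ m) i) y).card
      = (univ.filter fun m : Fin d => ∀ y ∈ X, θ m x ≤ θ m y).card
        + (univ.filter fun m : Fin d => ∀ y ∈ X, θ m y ≤ θ m x).card := by
    rw [← Finset.card_disjSum]
    congr 1
    ext i
    cases i with
    | inl m => simp
    | inr m =>
        simp [Equiv.Perm.mul_apply, Fin.rev_le_rev]
  rw [hsplit]
  have hXE : insert x (X.erase x) = X := insert_erase hx
  have hEcard : (X.erase x).card = r := by
    have := Finset.card_erase_of_mem hx
    omega
  -- value of the min-count on small sets
  have hc : ∀ s : ℕ, s + 1 ≤ k → ∀ t ∈ powersetCard s (X.erase x),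
      (((univ.filter fun m : Fin d => ∀ y ∈ insert x t, θ m x ≤ θ m y).card : ℚ))
        = (d : ℚ) / (s + 1) := by
    intro s hs t ht
    obtain ⟨hsub, hcard⟩ := mem_powersetCard.mp ht
    have hxt : x ∉ t := fun h => (notMem_erase x X) (hsub h)
    have hins : (insert x t).card = s + 1 := by
      rw [card_insert_of_notMem hxt, hcard]
    have hmn := hmin (s + 1) (Nat.succ_le_succ (Nat.zero_le s)) hs (insert x t) hins x
      (mem_insert_self x t)
    have hs1 : ((s : ℚ) + 1) ≠ 0 := by positivity
    rw [eq_div_iff hs1]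
    exact_mod_cast hmn
  -- inner sums for small cardinalities
  have inner_eq : ∀ s : ℕ, s + 1 ≤ k →
      ∑ t ∈ powersetCard s (X.erase x), ((-1 : ℚ) ^ t.card *
        ((univ.filter fun m : Fin d => ∀ y ∈ insert x t, θ m x ≤ θ m y).card : ℚ))
      = (-1 : ℚ) ^ s * (r.choose s) * ((d : ℚ) / (s + 1)) := by
    intro s hs
    have e : ∀ t ∈ powersetCard s (X.erase x), ((-1 : ℚ) ^ t.card *
        ((univ.filter fun m : Fin d => ∀ y ∈ insert x t, θ m x ≤ θ m y).card : ℚ))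
        = (-1 : ℚ) ^ s * ((d : ℚ) / (s + 1)) := by
      intro t ht
      rw [hc s hs t ht, (mem_powersetCard.mp ht).2]
    rw [Finset.sum_congr rfl e, Finset.sum_const, card_powersetCard, hEcard, nsmul_eq_mul]
    ring
  -- the inclusion-exclusion expansion of the max-count
  have hB := incl_excl n d θ X x hx
  rw [Finset.sum_powerset, hEcard] at hB
  rcases Nat.lt_or_ge r k with hrk | hrk
  · -- case `j ≤ k`
    have hA : ((univ.filter fun m : Fin d => ∀ y ∈ X, θ m x ≤ θ m y).card : ℚ) * (r + 1)
        = d := by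
      exact_mod_cast hmin (r + 1) hj1 hrk X hX x hx
    have hBval : ((univ.filter fun m : Fin d => ∀ y ∈ X, θ m y ≤ θ m x).card : ℚ) * (r + 1)
        = d := by
      rw [hB, Finset.sum_congr rfl (fun s hsm => inner_eq s (by
        have := Finset.mem_range.mp hsm; omega))]
      have e2 : ∀ s ∈ Finset.range (r + 1),
          (-1 : ℚ) ^ s * (r.choose s) * ((d : ℚ) / (s + 1))
          = (d : ℚ) * ((-1 : ℚ) ^ s * (r.choose s) / (s + 1)) := by
        intro s _; ring
      rw [Finset.sum_congr rfl e2, ← Finset.mul_sum, alt_sum_choose r]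
      have hr1 : ((r : ℚ) + 1) ≠ 0 := by positivity
      field_simp
    have key : (((univ.filter fun m : Fin d => ∀ y ∈ X, θ m x ≤ θ m y).card
        + (univ.filter fun m : Fin d => ∀ y ∈ X, θ m y ≤ θ m x).card) * (r + 1) : ℚ)
        = 2 * d := by
      ring_nf
      ring_nf at hA hBval
      linarith
    exact_mod_cast key
  · -- case `j = k + 1`
    have hrk' : r = k := by omega
    subst hrk'
    have hAX : ((univ.filter fun m : Fin d => ∀ y ∈ insert x (X.erase x),
        θ m x ≤ θ m y).card : ℚ)
        = ((univ.filter fun m : Fin d => ∀ y ∈ X, θ m x ≤ θ m y).card : ℚ) := by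
      rw [hXE]
    rw [Finset.sum_range_succ] at hB
    have hlast : ∑ t ∈ powersetCard r (X.erase x), ((-1 : ℚ) ^ t.card *
        ((univ.filter fun m : Fin d => ∀ y ∈ insert x t, θ m x ≤ θ m y).card : ℚ))
        = -(((univ.filter fun m : Fin d => ∀ y ∈ X, θ m x ≤ θ m y).card : ℚ)) := by
      have hpc : powersetCard r (X.erase x) = {X.erase x} := by
        rw [← hEcard]; exact powersetCard_self _
      rw [hpc, Finset.sum_singleton, hEcard, hAX, Odd.neg_one_pow hodd]
      ring
    have hrest : ∑ s ∈ Finset.range r, ∑ t ∈ powersetCard s (X.erase x), ((-1 : ℚ) ^ t.card *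
        ((univ.filter fun m : Fin d => ∀ y ∈ insert x t, θ m x ≤ θ m y).card : ℚ))
        = 2 * (d : ℚ) / (r + 1) := by
      rw [Finset.sum_congr rfl (fun s hsm => inner_eq s (by
        have := Finset.mem_range.mp hsm; omega))]
      have e2 : ∀ s ∈ Finset.range r,
          (-1 : ℚ) ^ s * (r.choose s) * ((d : ℚ) / (s + 1))
          = (d : ℚ) * ((-1 : ℚ) ^ s * (r.choose s) / (s + 1)) := by
        intro s _; ring
      rw [Finset.sum_congr rfl e2, ← Finset.mul_sum]
      have hfull := alt_sum_choose r
      rw [Finset.sum_range_succ] at hfull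
      have hr1 : ((r : ℚ) + 1) ≠ 0 := by positivity
      have hlastterm : (-1 : ℚ) ^ r * (r.choose r) / (r + 1) = -(1 / (r + 1)) := by
        rw [Nat.choose_self, Odd.neg_one_pow hodd]
        push_cast
        ring
      rw [hlastterm] at hfull
      have : ∑ s ∈ Finset.range r, (-1 : ℚ) ^ s * (r.choose s) / (s + 1) = 2 / (r + 1) := by
        field_simp at hfull ⊢
        linarith
      rw [this]
      ring
    have key : (((univ.filter fun m : Fin d => ∀ y ∈ X, θ m x ≤ θ m y).card
        + (univ.filter fun m : Fin d => ∀ y ∈ X, θ m y ≤ θ m x).card) * (r + 1) : ℚ)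
        = 2 * d := by
      rw [hlast, hrest] at hB
      have hr1 : ((r : ℚ) + 1) ≠ 0 := by positivity
      rw [hB]
      field_simp
      ring
    exact_mod_cast key
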